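/- Let X and Y be random variables with distributions F and G, F supported on ℝ, G(0−)=0, G(0)<1. Assume P[XY > x] ~ ∫₀^∞ h(y) F̄(x/y) G(dy) as x → ∞ for some bounded h : [0,∞) → (0,∞) with E[h(Y)] = 1, and that there is a(x) → ∞ with a(x)/x → 0 and Ḡ(a(x)) = o(H̄(x)). If F has dominatedly varying tail, then the product distribution H(x) = P[XY ≤ x] has dominatedly varying tail. -/

import Mathlib

open Filter MeasureTheory Asymptotics Topology ProbabilityTheory

noncomputable def rtail {Ω : Type*} [MeasureSpace Ω] (Z : Ω → ℝ) (x : ℝ) : ℝ :=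
  (ℙ {ω | x < Z ω}).toReal

def DomVar (T : ℝ → ℝ) : Prop :=
  ∀ b ∈ Set.Ioo (0:ℝ) 1, (fun x => T (b * x)) =O[atTop] T

lemma rtail_nonneg {Ω : Type*} [MeasureSpace Ω] (Z : Ω → ℝ) (x : ℝ) :
    0 ≤ rtail Z x := ENNReal.toReal_nonneg

lemma rtail_le_one {Ω : Type*} [MeasureSpace Ω] [IsProbabilityMeasure (ℙ : Measure Ω)]
    (Z : Ω → ℝ) (x : ℝ) : rtail Z x ≤ 1 := by
  have h1 : (ℙ {ω | x < Z ω}) ≤ 1 := prob_le_one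
  calc rtail Z x ≤ ENNReal.toReal 1 := ENNReal.toReal_mono ENNReal.one_ne_top h1
    _ = 1 := ENNReal.toReal_one

lemma rtail_anti {Ω : Type*} [MeasureSpace Ω] [IsProbabilityMeasure (ℙ : Measure Ω)]
    (Z : Ω → ℝ) : Antitone (rtail Z) := by
  intro s t hst
  exact ENNReal.toReal_mono (measure_ne_top _ _)
    (measure_mono (fun ω hω => lt_of_le_of_lt hst hω))

/-- under the weak-dependence product representation and the truncation
condition, dominated variation of `F` transfers to the product distribution `H`. -/
theorem stmt5 {Ω : Type*} [MeasureSpace Ω] [IsProbabilityMeasure (ℙ : Measure Ω)]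
    (X Y : Ω → ℝ) (hY : Measurable Y)
    (hFpos : ∀ x : ℝ, 0 < rtail X x)
    (hGneg : ℙ {ω | Y ω < 0} = 0) (hG0 : ℙ {ω | Y ω ≤ 0} < 1)
    (h : ℝ → ℝ) (K : ℝ) (hmeas : Measurable h)
    (hhpos : ∀ y, 0 < h y) (hbdd : ∀ y, h y ≤ K)
    (hmean : ∫ y, h y ∂(Measure.map Y ℙ) = 1)
    (hprod : Tendsto (fun x => rtail (fun ω => X ω * Y ω) x /
        ∫ y in Set.Ioi (0:ℝ), h y * rtail X (x / y) ∂(Measure.map Y ℙ)) atTop (𝓝 1))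
    (a : ℝ → ℝ) (ha1 : Tendsto a atTop atTop)
    (ha2 : Tendsto (fun x => a x / x) atTop (𝓝 0))
    (ha3 : (fun x => rtail Y (a x)) =o[atTop] rtail (fun ω => X ω * Y ω))
    (hD : DomVar (rtail X)) :
    DomVar (rtail (fun ω => X ω * Y ω)) := by
  classical
  set μ : Measure ℝ := Measure.map Y ℙ with hμ
  haveI : IsProbabilityMeasure μ := Measure.isProbabilityMeasure_map hY.aemeasurable
  set F : ℝ → ℝ := rtail X with hF
  set H : ℝ → ℝ := rtail (fun ω => X ω * Y ω) with hH
  set I : ℝ → ℝ := fun x => ∫ y in Set.Ioi (0:ℝ), h y * F (x / y) ∂μ with hI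
  have hFmeas : Measurable F := (rtail_anti X).measurable
  have hK0 : 0 ≤ K := le_trans (hhpos 0).le (hbdd 0)
  -- integrability of the integrand
  have hInt : ∀ (x : ℝ) (s : Set ℝ), IntegrableOn (fun y => h y * F (x / y)) s μ := by
    intro x s
    have hm : Measurable fun y => h y * F (x / y) :=
      hmeas.mul (hFmeas.comp (measurable_const.div measurable_id))
    have : Integrable (fun y => h y * F (x / y)) μ := by
      refine Integrable.mono' (integrable_const K) hm.aestronglyMeasurable ?_
      filter_upwards with y
      rw [Real.norm_eq_abs, abs_of_nonneg (mul_nonneg (hhpos y).le (rtail_nonneg X _))]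
      calc h y * F (x / y) ≤ K * 1 :=
            mul_le_mul (hbdd y) (rtail_le_one X _) (rtail_nonneg X _) hK0
        _ = K := mul_one K
    exact this.integrableOn
  have hInonneg : ∀ x, 0 ≤ I x := fun x =>
    setIntegral_nonneg measurableSet_Ioi
      (fun y _ => mul_nonneg (hhpos y).le (rtail_nonneg X _))
  -- tail of Y via μ
  have hμtail : ∀ t, (μ (Set.Ioi t)).toReal = rtail Y t := by
    intro t
    rw [hμ, Measure.map_apply hY measurableSet_Ioi]
    rfl
  -- from hD get constant C and threshold T
  obtain ⟨b, hb, -⟩ : ∃ b, b ∈ Set.Ioo (0:ℝ) 1 ∧ True := ⟨1/2, by norm_num, trivial⟩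
  clear hb b
  intro b hb
  obtain ⟨C, hC0, hCO⟩ := (hD b hb).exists_pos
  rw [IsBigOWith, eventually_atTop] at hCO
  obtain ⟨T, hT⟩ := hCO
  have hTbound : ∀ t ≥ T, F (b * t) ≤ C * F t := by
    intro t ht
    have := hT t ht
    rwa [Real.norm_eq_abs, Real.norm_eq_abs, abs_of_nonneg (rtail_nonneg X _),
      abs_of_nonneg (rtail_nonneg X _)] at this
  -- consequences of hprod
  have hratio : ∀ᶠ x in atTop, H x ≤ 2 * I x ∧ I x ≤ 2 * H x := by
    have h1 : ∀ᶠ x in atTop, H x / I x ∈ Set.Icc (1/2 : ℝ) 2 := by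
      refine hprod (Icc_mem_nhds ?_ ?_) <;> norm_num
    filter_upwards [h1] with x hx
    obtain ⟨hx1, hx2⟩ := hx
    have hIne : I x ≠ 0 := by
      intro h0
      rw [h0, div_zero] at hx1
      norm_num at hx1
    have hIpos : 0 < I x := lt_of_le_of_ne (hInonneg x) (Ne.symm hIne)
    constructor
    · have := (div_le_iff₀ hIpos).mp hx2
      linarith
    · have := (le_div_iff₀ hIpos).mp hx1
      linarith
  -- eventual conditions
  have hbx : Tendsto (fun x => b * x) atTop atTop :=
    (tendsto_id.const_mul_atTop hb.1)
  have hxa : Tendsto (fun x => x / a x) atTop atTop := by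
    have hapos : ∀ᶠ x in atTop, 0 < a x / x := by
      filter_upwards [ha1.eventually_gt_atTop 0, eventually_gt_atTop (0:ℝ)] with x h1 h2
      positivity
    have h0 : Tendsto (fun x => a x / x) atTop (𝓝[>] 0) :=
      tendsto_nhdsWithin_of_tendsto_nhds_of_eventually_within _ ha2 hapos
    have := h0.inv_tendsto_nhdsGT_zero
    refine this.congr' ?_
    filter_upwards with x
    simp [inv_div]
  have key : ∀ᶠ x in atTop, H (b * x) ≤ (4 * C + 2 * K) * H x := by
    have hsm := ha3.bound (c := 1) one_pos
    filter_upwards [hratio, hbx.eventually hratio, ha1.eventually_ge_atTop 1,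
      hxa.eventually_ge_atTop T, eventually_ge_atTop (0:ℝ), hsm] with x hr hrb ha1x hTx hx0 hsmx
    -- small tail bound
    have hsmall : rtail Y (a x) ≤ H x := by
      have := hsmx
      rwa [Real.norm_eq_abs, Real.norm_eq_abs, abs_of_nonneg (rtail_nonneg Y _),
        abs_of_nonneg (rtail_nonneg _ _), one_mul] at this
    have hax0 : (0:ℝ) ≤ a x := le_trans zero_le_one ha1x
    -- split I (b*x)
    have hsplit : I (b * x) = (∫ y in Set.Ioc 0 (a x), h y * F (b * x / y) ∂μ)
        + ∫ y in Set.Ioi (a x), h y * F (b * x / y) ∂μ := by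
      rw [hI]
      show (∫ y in Set.Ioi (0:ℝ), h y * F (b * x / y) ∂μ) = _
      rw [← Set.Ioc_union_Ioi_eq_Ioi hax0,
        setIntegral_union (Set.Ioc_disjoint_Ioi le_rfl) measurableSet_Ioi
          (hInt _ _) (hInt _ _)]
    -- first piece
    have hpiece1 : (∫ y in Set.Ioc 0 (a x), h y * F (b * x / y) ∂μ)
        ≤ C * I x := by
      have step1 : (∫ y in Set.Ioc 0 (a x), h y * F (b * x / y) ∂μ)
          ≤ ∫ y in Set.Ioc 0 (a x), C * (h y * F (x / y)) ∂μ := by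
        refine setIntegral_mono_on (hInt _ _) ((hInt x _).const_mul C)
          measurableSet_Ioc ?_
        intro y hy
        have hy0 : 0 < y := hy.1
        have hxy : T ≤ x / y := le_trans hTx (by gcongr; exact hy.2)
        have : F (b * (x / y)) ≤ C * F (x / y) := hTbound _ hxy
        rw [mul_div_assoc]
        calc h y * F (b * (x / y)) ≤ h y * (C * F (x / y)) :=
              mul_le_mul_of_nonneg_left this (hhpos y).le
          _ = C * (h y * F (x / y)) := by ring
      have step2 : (∫ y in Set.Ioc 0 (a x), C * (h y * F (x / y)) ∂μ)
          = C * ∫ y in Set.Ioc 0 (a x), h y * F (x / y) ∂μ := by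
        exact integral_const_mul _ _
      have step3 : (∫ y in Set.Ioc 0 (a x), h y * F (x / y) ∂μ) ≤ I x := by
        refine setIntegral_mono_set (hInt x _) ?_ ?_
        · filter_upwards with y using mul_nonneg (hhpos y).le (rtail_nonneg X _)
        · exact Filter.Eventually.of_forall (Set.Ioc_subset_Ioi_self)
      calc (∫ y in Set.Ioc 0 (a x), h y * F (b * x / y) ∂μ)
          ≤ C * ∫ y in Set.Ioc 0 (a x), h y * F (x / y) ∂μ := by
            rw [← step2]; exact step1
        _ ≤ C * I x := mul_le_mul_of_nonneg_left step3 hC0.le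
    -- second piece
    have hpiece2 : (∫ y in Set.Ioi (a x), h y * F (b * x / y) ∂μ)
        ≤ K * rtail Y (a x) := by
      have : (∫ y in Set.Ioi (a x), h y * F (b * x / y) ∂μ)
          ≤ ∫ _y in Set.Ioi (a x), K ∂μ := by
        refine setIntegral_mono_on (hInt _ _) (integrableOn_const ?_)
          measurableSet_Ioi ?_
        · exact measure_ne_top μ _
        · intro y _
          calc h y * F (b * x / y) ≤ K * 1 :=
                mul_le_mul (hbdd y) (rtail_le_one X _) (rtail_nonneg X _) hK0
            _ = K := mul_one K
      rw [setIntegral_const, smul_eq_mul, measureReal_def, hμtail] at this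
      linarith [this]
    -- combine
    have hHbx : H (b * x) ≤ 2 * I (b * x) := hrb.1
    have : I (b * x) ≤ C * I x + K * rtail Y (a x) := by
      rw [hsplit]; exact add_le_add hpiece1 hpiece2
    have hKH : K * rtail Y (a x) ≤ K * H x :=
      mul_le_mul_of_nonneg_left hsmall hK0
    have hIx : I x ≤ 2 * H x := hr.2
    calc H (b * x) ≤ 2 * I (b * x) := hHbx
      _ ≤ 2 * (C * I x + K * H x) := by nlinarith
      _ ≤ 2 * (C * (2 * H x) + K * H x) := by nlinarith
      _ = (4 * C + 2 * K) * H x := by ring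
  rw [isBigO_iff]
  refine ⟨4 * C + 2 * K, ?_⟩
  filter_upwards [key] with x hx
  rw [Real.norm_eq_abs, Real.norm_eq_abs, abs_of_nonneg (rtail_nonneg _ _),
    abs_of_nonneg (rtail_nonneg _ _)]
  exact hx
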